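/- Let F be a Furstenberg family such that span(E(S)) ⊆ FRec(S) for every complex linear dynamical system (Y,S), where E(S) denotes the set of unimodular eigenvectors of S. Then for every F-recurrent complex linear dynamical system (X,T) there exists an infinite-dimensional T-invariant vector subspace Z ⊆ X such that Z^N ⊆ FRec(T_(N)) for every N ∈ ℕ. In particular, FRec(T) is lineable. -/

import Mathlib

open Filter Topology Set

universe u

/-- The `N`-fold product map `T × ⋯ × T` on `X^N`. -/
def prodMap {X : Type*} (T : X → X) (N : ℕ) : (Fin N → X) → (Fin N → X) :=
  fun x i => T (x i)

/-- A Furstenberg family. -/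
def IsFurstenbergFamily (F : Set (Set ℕ)) : Prop :=
  (∀ A ∈ F, A.Infinite) ∧ (∀ A ∈ F, ∀ B : Set ℕ, A ⊆ B → B ∈ F) ∧
  (∀ A ∈ F, ∀ n : ℕ, (A ∩ {m : ℕ | n ≤ m}) ∈ F)

/-- The return set `N(x,U) = {n ∈ ℕ₀ : T^n x ∈ U}`. -/
def retSet {X : Type*} (T : X → X) (x : X) (U : Set X) : Set ℕ :=
  {n : ℕ | T^[n] x ∈ U}

/-- `x` is an `F`-recurrent point for `T`. -/
def FRecPt {X : Type*} [TopologicalSpace X] (F : Set (Set ℕ)) (T : X → X) (x : X) : Prop :=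
  ∀ U ∈ 𝓝 x, retSet T x U ∈ F

/-- The set of unimodular eigenvectors of `T`. -/
def unimodEigenvectors {X : Type*} [AddCommGroup X] [Module ℂ X] (T : X → X) : Set X :=
  {y : X | y ≠ 0 ∧ ∃ lam : ℂ, ‖lam‖ = 1 ∧ T y = lam • y}

set_option linter.unusedSectionVars false

section Basic

variable {X : Type*} [TopologicalSpace X] {F : Set (Set ℕ)}

lemma prodMap_iterate {T : X → X} {N : ℕ} (n : ℕ) (z : Fin N → X) :
    (prodMap T N)^[n] z = fun i => T^[n] (z i) := by
  induction n with
  | zero => rfl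
  | succ n ih =>
    funext i
    rw [Function.iterate_succ_apply', ih, Function.iterate_succ_apply']
    rfl

lemma comm_iterate {T q : X → X} (hq : ∀ y, q (T y) = T (q y)) (n : ℕ) (x : X) :
    q (T^[n] x) = T^[n] (q x) := by
  induction n with
  | zero => rfl
  | succ n ih => rw [Function.iterate_succ_apply', Function.iterate_succ_apply', hq, ih]

/-- single-point version -/
lemma frecPt_of_comm (hF : IsFurstenbergFamily F) {T : X → X} {x : X}
    (hx : FRecPt F T x) {q : X → X} (hqc : Continuous q) (hq : ∀ y, q (T y) = T (q y)) :
    FRecPt F T (q x) := by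
  intro U hU
  have hV : q ⁻¹' U ∈ 𝓝 x := hqc.continuousAt.preimage_mem_nhds hU
  refine hF.2.1 _ (hx _ hV) _ ?_
  intro n hn
  simp only [retSet, mem_setOf_eq] at hn ⊢
  rw [← comm_iterate hq]
  exact hn

/-- tuple version -/
lemma frecPt_tuple_of_comm (hF : IsFurstenbergFamily F) {T : X → X} {x : X}
    (hx : FRecPt F T x) {N : ℕ} (q : Fin N → X → X) (hqc : ∀ i, Continuous (q i))
    (hq : ∀ i y, q i (T y) = T (q i y)) :
    FRecPt F (prodMap T N) (fun i => q i x) := by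
  intro U hU
  rw [nhds_pi] at hU
  obtain ⟨I, V, hV, hVU⟩ := Filter.mem_pi'.1 hU
  have hW : (⋂ i, (q i) ⁻¹' (V i)) ∈ 𝓝 x := by
    refine Filter.iInter_mem.2 fun i => (hqc i).continuousAt.preimage_mem_nhds (hV i)
  refine hF.2.1 _ (hx _ hW) _ ?_
  intro n hn
  simp only [retSet, mem_setOf_eq, mem_iInter, mem_preimage] at hn ⊢
  rw [prodMap_iterate]
  refine hVU ?_
  intro i _
  simp only
  rw [← comm_iterate (hq i)]
  exact hn i

end Basic

lemma core_unimodular {M : Type*} [AddCommGroup M] [Module ℂ M] [TopologicalSpace M]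
    [IsTopologicalAddGroup M] [ContinuousSMul ℂ M] [T2Space M] [FiniteDimensional ℂ M]
    (g : Module.End ℂ M) {w : M} (hw : w ≠ 0) {lam : ℂ}
    (hgen : ∃ K : ℕ, ((g - lam • (1 : Module.End ℂ M)) ^ K) w = 0)
    {φ : ℕ → ℕ} (hφ : StrictMono φ)
    (hconv : Tendsto (fun k => g^[φ k] w) atTop (𝓝 w)) :
    g w = lam • w ∧ ‖lam‖ = 1 := by
  classical
  set Nn : Module.End ℂ M := g - lam • 1 with hNn
  set u : ℕ → M := fun j => (Nn ^ j) w with hu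
  have hu0 : u 0 = w := by simp [hu]
  have hex : ∃ K, u K = 0 := hgen
  set K0 := Nat.find hex with hK0def
  have hK0 : u K0 = 0 := Nat.find_spec hex
  have hne : ∀ j < K0, u j ≠ 0 := fun j hj => Nat.find_min hex hj
  have hpos : 0 < K0 := by
    rcases Nat.eq_zero_or_pos K0 with h | h
    · exact absurd (h ▸ hK0) (by rw [hu0]; exact hw)
    · exact h
  have hshift : ∀ a b, (Nn ^ a) (u b) = u (a + b) := by
    intro a b
    simp only [hu, ← Module.End.mul_apply, ← pow_add]
  have hzero : ∀ j, K0 ≤ j → u j = 0 := by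
    intro j hj
    have : u j = (Nn ^ (j - K0)) (u K0) := by
      rw [hshift]; congr 1; omega
    rw [this, hK0, map_zero]
  set v : Fin K0 → M := fun j => u j with hv
  -- linear independence
  have hindep : LinearIndependent ℂ v := by
    rw [Fintype.linearIndependent_iff]
    intro c hc
    have key : ∀ n : ℕ, ∀ j : Fin K0, (j : ℕ) = n → c j = 0 := by
      intro n
      induction n using Nat.strong_induction_on with
      | _ n IH =>
        intro j hj
        have h2 : (Nn ^ (K0 - 1 - (j : ℕ))) (∑ i, c i • v i) = 0 := by
          rw [hc, map_zero]
        rw [map_sum] at h2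
        have h3 : ∀ i ∈ Finset.univ, i ≠ j →
            (Nn ^ (K0 - 1 - (j : ℕ))) (c i • v i) = 0 := by
          intro i _ hij
          rw [map_smul]
          rcases lt_or_gt_of_ne (fun h : (i : ℕ) = (j : ℕ) => hij (Fin.ext h)) with hlt | hgt
          · rw [IH i (hj ▸ hlt) i rfl, zero_smul]
          · have : (Nn ^ (K0 - 1 - (j : ℕ))) (v i) = u ((K0 - 1 - (j : ℕ)) + (i : ℕ)) :=
              hshift _ _
            rw [this, hzero _ (by omega), smul_zero]
        have h4 := Finset.sum_eq_single_of_mem j (Finset.mem_univ j) h3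
        rw [h4] at h2
        rw [map_smul, hshift] at h2
        have hmeq : (K0 - 1 - (j : ℕ)) + (j : ℕ) = K0 - 1 := by omega
        rw [hmeq] at h2
        exact (smul_eq_zero.1 h2).resolve_right (hne _ (by omega))
    exact fun j => key (j : ℕ) j rfl
  -- dual functionals
  have hdual : ∀ j0 : Fin K0, ∃ ψ : M →ₗ[ℂ] ℂ,
      (∀ j, ψ (v j) = if j = j0 then 1 else 0) := by
    intro j0
    set Vs := Submodule.span ℂ (Set.range v) with hVs
    set B : Module.Basis (Fin K0) ℂ Vs := Module.Basis.span hindep with hB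
    obtain ⟨q, hq⟩ := Vs.exists_isCompl
    refine ⟨(B.coord j0).comp (Vs.linearProjOfIsCompl q hq), fun j => ?_⟩
    have hm : v j ∈ Vs := Submodule.subset_span (mem_range_self j)
    have h1 : Vs.linearProjOfIsCompl q hq (v j) = ⟨v j, hm⟩ :=
      Submodule.linearProjOfIsCompl_apply_left hq ⟨v j, hm⟩
    have h2 : (⟨v j, hm⟩ : Vs) = B j := (Module.Basis.span_apply hindep j).symm
    simp only [LinearMap.comp_apply, h1, h2, Module.Basis.coord_apply, Module.Basis.repr_self]
    simp [Finsupp.single_apply, eq_comm]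
  -- expansion of powers
  have hgn : ∀ n, K0 - 1 ≤ n →
      (g ^ n) w = ∑ j : Fin K0, (((n.choose (j : ℕ) : ℂ)) * lam ^ (n - (j : ℕ))) • v j := by
    intro n hn
    have hcomm : Commute Nn (lam • (1 : Module.End ℂ M)) :=
      (Commute.one_right Nn).smul_right lam
    have hg : g = Nn + lam • 1 := by rw [hNn]; abel
    have hpow := Commute.add_pow hcomm n
    have happ : (g ^ n) w
        = ∑ k ∈ Finset.range (n + 1), ((n.choose k : ℂ) * lam ^ (n - k)) • u k := by
      rw [hg, hpow, LinearMap.sum_apply]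
      refine Finset.sum_congr rfl fun k hk => ?_
      have : (Nn ^ k * (lam • (1 : Module.End ℂ M)) ^ (n - k) * (n.choose k : Module.End ℂ M)) w
          = (Nn ^ k) (((lam • (1 : Module.End ℂ M)) ^ (n - k)) ((n.choose k : Module.End ℂ M) w)) := by
        simp [Module.End.mul_apply]
      rw [this]
      simp only [Module.End.natCast_apply, smul_pow, one_pow, LinearMap.smul_apply,
        Module.End.one_apply, map_smul, map_nsmul, mul_smul]
      rw [Nat.cast_smul_eq_nsmul ℂ, smul_comm]
    rw [happ]
    rw [← Finset.sum_subset (Finset.range_subset_range.2 (by omega : K0 ≤ n + 1))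
      (fun x _ hx => by rw [hzero x (by simpa using hx), smul_zero])]
    rw [Finset.sum_range fun k => ((n.choose k : ℂ) * lam ^ (n - k)) • u k]
  -- limits of coefficients
  have hlimgen : ∀ j0 : Fin K0, ∀ ψ : M →ₗ[ℂ] ℂ, (∀ j, ψ (v j) = if j = j0 then 1 else 0) →
      Tendsto (fun k => ((φ k).choose (j0 : ℕ) : ℂ) * lam ^ (φ k - (j0 : ℕ))) atTop
        (𝓝 (if (⟨0, hpos⟩ : Fin K0) = j0 then 1 else 0)) := by
    intro j0 ψ hψ
    have hcont : Continuous ψ := ψ.continuous_of_finiteDimensional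
    have h1 : Tendsto (fun k => ψ (g^[φ k] w)) atTop (𝓝 (ψ w)) :=
      (hcont.tendsto w).comp hconv
    have hψw : ψ w = if (⟨0, hpos⟩ : Fin K0) = j0 then 1 else 0 := by
      have hwv : w = v ⟨0, hpos⟩ := hu0.symm
      rw [hwv, hψ]
    rw [hψw] at h1
    refine Tendsto.congr' ?_ h1
    filter_upwards [eventually_ge_atTop (K0 - 1)] with k hk
    have hk' : K0 - 1 ≤ φ k := le_trans hk hφ.le_apply
    rw [← Module.End.pow_apply, hgn _ hk', map_sum]
    simp only [map_smul, hψ, smul_eq_mul, mul_ite, mul_one, mul_zero]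
    rw [Finset.sum_ite_eq' Finset.univ j0 (fun j => ((φ k).choose (j : ℕ) : ℂ) * lam ^ (φ k - (j : ℕ)))]
    simp
  obtain ⟨ψ0, hψ0⟩ := hdual ⟨0, hpos⟩
  have hlam : Tendsto (fun k => lam ^ (φ k)) atTop (𝓝 1) := by
    have h := hlimgen ⟨0, hpos⟩ ψ0 hψ0
    rw [if_pos rfl] at h
    refine h.congr (fun k => ?_)
    simp
  have hφtop : Tendsto φ atTop atTop := hφ.tendsto_atTop
  have habs : Tendsto (fun k => ‖lam‖ ^ (φ k)) atTop (𝓝 1) := by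
    have h := (continuous_norm.tendsto 1).comp hlam
    simpa [Function.comp_def, norm_pow] using h
  have habs1 : ‖lam‖ = 1 := by
    rcases lt_trichotomy ‖lam‖ 1 with h | h | h
    · have h0 : Tendsto (fun k => ‖lam‖ ^ (φ k)) atTop (𝓝 0) :=
        (tendsto_pow_atTop_nhds_zero_of_lt_one (norm_nonneg lam) h).comp hφtop
      exact absurd (tendsto_nhds_unique habs h0) one_ne_zero
    · exact h
    · have h0 : Tendsto (fun k => ‖lam‖ ^ (φ k)) atTop atTop :=
        (tendsto_pow_atTop_atTop_of_one_lt h).comp hφtop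
      exact absurd habs (not_tendsto_nhds_of_tendsto_atTop h0 1)
  have hK01 : K0 = 1 := by
    by_contra hK
    have h2K : 2 ≤ K0 := by omega
    have hlt : K0 - 1 < K0 := by omega
    obtain ⟨ψ, hψ⟩ := hdual ⟨K0 - 1, hlt⟩
    have hne0 : (⟨0, hpos⟩ : Fin K0) ≠ ⟨K0 - 1, hlt⟩ := by
      simp only [ne_eq, Fin.mk.injEq]
      omega
    have h := hlimgen ⟨K0 - 1, hlt⟩ ψ hψ
    rw [if_neg hne0] at h
    have habs0 : Tendsto (fun k => ((φ k).choose (K0 - 1) : ℝ)) atTop (𝓝 0) := by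
      have h2 := (continuous_norm.tendsto 0).comp h
      simp only [Function.comp_def, norm_mul, norm_pow, habs1, one_pow, mul_one, norm_zero,
        Complex.norm_natCast] at h2
      exact h2
    have hge : ∀ᶠ k in atTop, (1 : ℝ) ≤ ((φ k).choose (K0 - 1) : ℝ) := by
      filter_upwards [eventually_ge_atTop (K0 - 1)] with k hk
      have hk' : K0 - 1 ≤ φ k := le_trans hk hφ.le_apply
      exact_mod_cast Nat.one_le_iff_ne_zero.2 (Nat.choose_pos hk').ne'
    have hcontr := ge_of_tendsto habs0 hge
    linarith
  refine ⟨?_, habs1⟩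
  have h1 : u 1 = 0 := hzero 1 (by omega)
  have hNw : Nn w = 0 := by
    have : (Nn ^ 1) w = Nn w := by rw [pow_one]
    rw [← this]; exact h1
  have : g w - lam • w = 0 := by
    have : Nn w = g w - lam • w := by
      simp [hNn, LinearMap.sub_apply, LinearMap.smul_apply]
    rwa [this] at hNw
  exact sub_eq_zero.1 this

lemma mem_span_eig {X : Type*} [AddCommGroup X] [Module ℂ X] [TopologicalSpace X]
    [IsTopologicalAddGroup X] [ContinuousSMul ℂ X] [PolishSpace X]
    (T : X →L[ℂ] X) (x : X)
    (hrec : ∀ U ∈ 𝓝 x, {n : ℕ | (⇑T)^[n] x ∈ U}.Infinite)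
    (hfin : FiniteDimensional ℂ (Submodule.span ℂ (Set.range fun n => (⇑T)^[n] x))) :
    x ∈ Submodule.span ℂ (unimodEigenvectors ⇑T) := by
  classical
  set M : Submodule ℂ X := Submodule.span ℂ (Set.range fun n => (⇑T)^[n] x) with hM
  have hxM : x ∈ M := Submodule.subset_span ⟨0, rfl⟩
  have hinv : ∀ y ∈ M, T y ∈ M := by
    intro y hy
    refine Submodule.span_induction (p := fun y _ => T y ∈ M) ?_ ?_ ?_ ?_ hy
    · rintro _ ⟨n, rfl⟩
      exact Submodule.subset_span ⟨n + 1, Function.iterate_succ_apply' (⇑T) n x⟩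
    · simp
    · intro a b _ _ ha hb
      rw [map_add]; exact M.add_mem ha hb
    · intro a y _ hy
      rw [map_smul]; exact M.smul_mem a hy
  set f : Module.End ℂ M := (T : X →ₗ[ℂ] X).restrict hinv with hf
  have hfcoe : ∀ y : M, ((f y : M) : X) = T (y : X) := fun y => rfl
  have hiter : ∀ n, ∀ y : M, ((f^[n] y : M) : X) = (⇑T)^[n] (y : X) := by
    intro n
    induction n with
    | zero => intro y; rfl
    | succ n ih =>
      intro y
      rw [Function.iterate_succ_apply', Function.iterate_succ_apply', hfcoe, ih]
  -- extract a convergent subsequence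
  have hcluster : MapClusterPt x atTop (fun n => (⇑T)^[n] x) := by
    rw [mapClusterPt_iff_frequently]
    intro s hs
    rw [Nat.frequently_atTop_iff_infinite]
    exact hrec s hs
  obtain ⟨ψ, hψmono, hψtend⟩ := TopologicalSpace.FirstCountableTopology.tendsto_subseq hcluster
  have htendM : Tendsto (fun k => f^[ψ k] ⟨x, hxM⟩) atTop (𝓝 (⟨x, hxM⟩ : M)) := by
    rw [Topology.IsInducing.subtypeVal.tendsto_nhds_iff]
    refine hψtend.congr fun k => ?_
    exact (hiter (ψ k) ⟨x, hxM⟩).symm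
  haveI : FiniteDimensional ℂ M := hfin
  have htop := Module.End.iSup_maxGenEigenspace_eq_top f
  have hmemtop : (⟨x, hxM⟩ : M) ∈ ⨆ μ, f.maxGenEigenspace μ := htop ▸ Submodule.mem_top
  rw [Submodule.mem_iSup_iff_exists_finsupp] at hmemtop
  obtain ⟨c, hc, hsum⟩ := hmemtop
  -- each component is a unimodular eigenvector
  have hcomp : ∀ μ ∈ c.support, ((c μ : M) : X) ∈ unimodEigenvectors ⇑T := by
    intro μ hμs
    set A := f.maxGenEigenspace μ with hA
    set B := ⨆ ν ∈ {ν : ℂ | ν ≠ μ}, f.maxGenEigenspace ν with hB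
    have hdis : Disjoint A B := (Module.End.independent_maxGenEigenspace f).disjoint_biSup (by simp)
    have hcod : Codisjoint A B := by
      rw [codisjoint_iff, eq_top_iff, ← htop]
      refine iSup_le fun ν => ?_
      rcases eq_or_ne ν μ with rfl | hν
      · exact le_sup_left
      · exact le_trans (le_iSup₂ (f := fun ν (_ : ν ∈ {ν : ℂ | ν ≠ μ}) => f.maxGenEigenspace ν) ν hν)
          le_sup_right
    have hcompl : IsCompl A B := ⟨hdis, hcod⟩
    set π : M →ₗ[ℂ] M := A.subtype ∘ₗ (A.linearProjOfIsCompl B hcompl) with hπ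
    have hπA : ∀ y : M, ∀ h : y ∈ A, π y = y := by
      intro y h
      have := Submodule.projectionOnto_apply_of_mem_left hcompl h
      simp only [hπ, LinearMap.comp_apply]
      erw [this]
      rfl
    have hπB : ∀ y : M, y ∈ B → π y = 0 := by
      intro y h
      simp only [hπ, LinearMap.comp_apply]
      erw [Submodule.projectionOnto_apply_of_mem_right hcompl h]
      exact map_zero _
    have hfinv : ∀ ν : ℂ, ∀ y : M, y ∈ f.maxGenEigenspace ν → ∀ n : ℕ,
        (f ^ n) y ∈ f.maxGenEigenspace ν := by
      intro ν y hy n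
      induction n with
      | zero => simpa using hy
      | succ n ih =>
        rw [pow_succ']
        exact Module.End.mapsTo_maxGenEigenspace_of_comm (Commute.refl f) ν ih
    have hπn : ∀ n : ℕ, π ((f ^ n) ⟨x, hxM⟩) = (f ^ n) (c μ) := by
      intro n
      have hsum' : (f ^ n) (⟨x, hxM⟩ : M) = ∑ ν ∈ c.support, (f ^ n) (c ν) := by
        rw [← hsum, Finsupp.sum, map_sum]
      rw [hsum', map_sum, Finset.sum_eq_single_of_mem μ hμs (fun ν _ hνμ =>
        hπB _ (le_iSup₂ (f := fun ν (_ : ν ∈ {ν : ℂ | ν ≠ μ}) => f.maxGenEigenspace ν) ν hνμ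
          (hfinv ν (c ν) (hc ν) n)))]
      exact hπA _ (hfinv μ (c μ) (hc μ) n)
    have hπcont : Continuous π := π.continuous_of_finiteDimensional
    have htendμ : Tendsto (fun k => f^[ψ k] (c μ)) atTop (𝓝 (c μ)) := by
      have h1 : Tendsto (fun k => π (f^[ψ k] ⟨x, hxM⟩)) atTop (𝓝 (π ⟨x, hxM⟩)) :=
        (hπcont.tendsto _).comp htendM
      have h2 : π (⟨x, hxM⟩ : M) = c μ := by
        have := hπn 0
        simpa using this
      rw [h2] at h1
      refine h1.congr fun k => ?_
      rw [← Module.End.pow_apply, ← Module.End.pow_apply, hπn]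
    have hw0 : c μ ≠ 0 := Finsupp.mem_support_iff.1 hμs
    have hgenK : ∃ K : ℕ, ((f - μ • (1 : Module.End ℂ M)) ^ K) (c μ) = 0 :=
      (Module.End.mem_maxGenEigenspace f μ (c μ)).1 (hc μ)
    obtain ⟨hfw, habs⟩ := core_unimodular f hw0 hgenK hψmono htendμ
    refine ⟨?_, μ, habs, ?_⟩
    · simpa using hw0
    · have : T ((c μ : M) : X) = ((f (c μ) : M) : X) := (hfcoe (c μ)).symm
      rw [this, hfw]
      rfl
  -- conclude
  have hxsum : x = ∑ ν ∈ c.support, ((c ν : M) : X) := by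
    have : ((⟨x, hxM⟩ : M) : X) = x := rfl
    rw [← this, ← hsum, Finsupp.sum]
    simp
  rw [hxsum]
  exact Submodule.sum_mem _ fun ν hν => Submodule.subset_span (hcomp ν hν)


/-- Lineability of `FRec(T)` for families `F` with `span(E(S)) ⊆ FRec(S)` for every
complex linear dynamical system `(Y,S)`: every `F`-recurrent complex linear system
admits an infinite-dimensional `T`-invariant subspace `Z` with `Z^N ⊆ FRec(T_(N))` for
every `N`; in particular `FRec(T)` is lineable. -/
theorem stmt18 (F : Set (Set ℕ)) (hF : IsFurstenbergFamily F)
    (hEig : ∀ (Y : Type u) [AddCommGroup Y] [Module ℂ Y] [TopologicalSpace Y]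
      [IsTopologicalAddGroup Y] [ContinuousSMul ℂ Y] [PolishSpace Y],
      ¬ FiniteDimensional ℂ Y → ∀ S : Y →L[ℂ] Y,
        (Submodule.span ℂ (unimodEigenvectors (⇑S)) : Set Y) ⊆
          {y : Y | FRecPt F (⇑S) y})
    {X : Type u} [AddCommGroup X] [Module ℂ X] [TopologicalSpace X]
    [IsTopologicalAddGroup X] [ContinuousSMul ℂ X] [PolishSpace X]
    (hX : ¬ FiniteDimensional ℂ X)
    (T : X →L[ℂ] X) (hTrec : Dense {x : X | FRecPt F (⇑T) x}) :
    ∃ Z : Submodule ℂ X, ¬ FiniteDimensional ℂ Z ∧ (∀ x ∈ Z, T x ∈ Z) ∧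
      (∀ N : ℕ, ∀ z : Fin N → X, (∀ i, z i ∈ Z) → FRecPt F (prodMap (⇑T) N) z) ∧
      (Z : Set X) ⊆ {x : X | FRecPt F (⇑T) x} := by
  classical
  by_cases hcase : ∃ x : X, FRecPt F (⇑T) x ∧
      ¬ FiniteDimensional ℂ (Submodule.span ℂ (Set.range fun n => (⇑T)^[n] x))
  · -- Case A: some recurrent point has infinite-dimensional orbit span
    obtain ⟨x, hx, hxinf⟩ := hcase
    set Z : Submodule ℂ X :=
      { carrier := {z | ∃ q : X →L[ℂ] X, (∀ y, q (T y) = T (q y)) ∧ q x = z}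
        add_mem' := by
          rintro a b ⟨q1, hq1, h1⟩ ⟨q2, hq2, h2⟩
          exact ⟨q1 + q2, fun y => by simp [hq1 y, hq2 y], by simp [h1, h2]⟩
        zero_mem' := ⟨0, fun y => by simp, rfl⟩
        smul_mem' := by
          rintro a z ⟨q, hq, h⟩
          exact ⟨a • q, fun y => by simp [hq y], by simp [h]⟩ } with hZdef
    have hle : Submodule.span ℂ (Set.range fun n => (⇑T)^[n] x) ≤ Z := by
      refine Submodule.span_le.2 ?_
      rintro _ ⟨n, rfl⟩
      refine ⟨T ^ n, fun y => ?_, ?_⟩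
      · simp only [← ContinuousLinearMap.mul_apply, ← pow_succ, ← pow_succ']
      · show (T ^ n) x = (⇑T)^[n] x
        induction n with
        | zero => simp
        | succ n ih =>
          rw [pow_succ', ContinuousLinearMap.mul_apply, Function.iterate_succ_apply', ih]
    refine ⟨Z, ?_, ?_, ?_, ?_⟩
    · -- infinite dimensional
      intro hfin
      refine hxinf ?_
      haveI := hfin
      exact Submodule.finiteDimensional_of_le hle
    · -- invariance
      rintro z ⟨q, hq, h⟩
      exact ⟨T.comp q, fun y => by simp [hq y], by simp [h]⟩
    · -- tuples
      intro N z hz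
      choose q hq hqx using hz
      have := frecPt_tuple_of_comm hF hx (fun i => ⇑(q i))
        (fun i => (q i).continuous) (fun i y => hq i y)
      have hzz : (fun i => q i x) = z := funext fun i => hqx i
      rwa [hzz] at this
    · -- inclusion in FRec
      rintro z ⟨q, hq, h⟩
      exact h ▸ frecPt_of_comm hF hx q.continuous hq
  · -- Case B: every recurrent point has finite-dimensional orbit span
    push_neg at hcase
    set Z := Submodule.span ℂ (unimodEigenvectors ⇑T) with hZ
    have hsub : {x : X | FRecPt F (⇑T) x} ⊆ (Z : Set X) := by
      intro x hx
      exact mem_span_eig T x (fun U hU => hF.1 _ (hx U hU)) (hcase x hx)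
    have hdense : Dense (Z : Set X) := hTrec.mono hsub
    refine ⟨Z, ?_, ?_, ?_, fun z hz => hEig X hX T hz⟩
    · -- infinite dimensional
      intro hfin
      haveI := hfin
      have hclosed : IsClosed (Z : Set X) := Submodule.closed_of_finiteDimensional Z
      have huniv : (Z : Set X) = univ := by
        rw [← hclosed.closure_eq, hdense.closure_eq]
      have htop : Z = ⊤ := Submodule.eq_top_iff'.2 fun y => by
        rw [← SetLike.mem_coe, huniv]; trivial
      rw [htop] at hfin
      exact hX (Submodule.topEquiv.finiteDimensional)
    · -- invariance
      intro y hy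
      refine Submodule.span_induction (p := fun y _ => T y ∈ Z) ?_ ?_ ?_ ?_ hy
      · rintro w ⟨hw0, lam, habs, heq⟩
        rw [heq]
        exact Z.smul_mem lam (Submodule.subset_span ⟨hw0, lam, habs, heq⟩)
      · simp
      · intro a b _ _ ha hb
        rw [map_add]; exact Z.add_mem ha hb
      · intro a w _ hw
        rw [map_smul]; exact Z.smul_mem a hw
    · -- tuples
      intro N z hz
      rcases Nat.eq_zero_or_pos N with rfl | hN
      · -- N = 0
        intro U hU
        have huniv : retSet (prodMap (⇑T) 0) z U = univ := by
          refine eq_univ_of_forall fun n => ?_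
          show (prodMap (⇑T) 0)^[n] z ∈ U
          have : (prodMap (⇑T) 0)^[n] z = z := by
            induction n with
            | zero => rfl
            | succ n ih => rw [Function.iterate_succ_apply', ih]; exact funext fun i => i.elim0
          rw [this]
          exact mem_of_mem_nhds hU
        obtain ⟨x0, hx0⟩ := hTrec.nonempty
        have hUF : Set.univ ∈ F := by
          have := hx0 univ univ_mem
          exact hF.2.1 _ this _ (subset_univ _)
        rw [huniv]
        exact hUF
      · -- N ≥ 1
        set S : (Fin N → X) →L[ℂ] (Fin N → X) :=
          ContinuousLinearMap.pi (fun i => T.comp (ContinuousLinearMap.proj i)) with hS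
        have hScoe : ⇑S = prodMap (⇑T) N := rfl
        have hnfin : ¬ FiniteDimensional ℂ (Fin N → X) := by
          intro h
          refine hX ?_
          haveI := h
          exact Module.Finite.of_surjective (LinearMap.proj (R := ℂ) (φ := fun _ : Fin N => X)
            ⟨0, hN⟩) (fun y => ⟨fun _ => y, rfl⟩)
        have hmem : z ∈ Submodule.span ℂ (unimodEigenvectors ⇑S) := by
          have hzdec : z = ∑ i, Pi.single i (z i) := (Finset.univ_sum_single z).symm
          rw [hzdec]
          refine Submodule.sum_mem _ fun i _ => ?_
          have key : Submodule.map (LinearMap.single ℂ (fun _ : Fin N => X) i) Z ≤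
              Submodule.span ℂ (unimodEigenvectors ⇑S) := by
            rw [hZ, Submodule.map_span, Submodule.span_le]
            rintro _ ⟨w, ⟨hw0, lam, habs, heq⟩, rfl⟩
            have hsingle : (LinearMap.single ℂ (fun _ : Fin N => X) i) w = Pi.single i w := rfl
            rw [hsingle]
            refine Submodule.subset_span ⟨?_, lam, habs, ?_⟩
            · intro h
              apply hw0
              have := congrFun h i
              simpa using this
            · funext j
              have happ : (⇑S) (Pi.single i w) j = T ((Pi.single i w : Fin N → X) j) := by
                rw [hScoe]; rfl
              rcases eq_or_ne j i with rfl | hj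
              · rw [happ, Pi.single_eq_same, heq, Pi.smul_apply, Pi.single_eq_same]
              · rw [happ, Pi.single_eq_of_ne hj, map_zero, Pi.smul_apply,
                  Pi.single_eq_of_ne hj, smul_zero]
          exact key ⟨z i, hz i, rfl⟩
        have := hEig (Fin N → X) hnfin S hmem
        rwa [← hScoe]
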